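/- Let (A,d) be a compact metric space with more than one element. Then there is no choice of operations G : A⁴ → A, K : A² → A, and ψ_m : A² → A (for m ∈ ℕ) satisfying the equations of Σ₂ — namely G(ψ_{m+k}(x,y), ψ_m(x,y), x, y) = x for all m ∈ ℕ, k ≥ 1, x, y ∈ A, and K(x,y) = G(u,u,x,y) = K(y,x) for all u, x, y ∈ A — such that both χ(G) < diam(A)/2 and χ(K) < diam(A)/2. Equivalently, for every such system of operations, max(χ(G), χ(K)) ≥ diam(A)/2. -/

import Mathlib

open scoped ENNReal

/-- The jump of `f` at `b`: the infimum, over open neighborhoods `U` of `b`,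
of the diameter (in `[0,∞]`) of `f '' U`. -/
noncomputable def jumpAt {B A : Type*} [TopologicalSpace B] [PseudoEMetricSpace A]
    (f : B → A) (b : B) : ℝ≥0∞ :=
  ⨅ (U : Set B) (_ : IsOpen U) (_ : b ∈ U), EMetric.diam (f '' U)

/-- The jump of `f`: the supremum over all points of the jump of `f` there. -/
noncomputable def jump {B A : Type*} [TopologicalSpace B] [PseudoEMetricSpace A]
    (f : B → A) : ℝ≥0∞ :=
  ⨆ b, jumpAt f b

private lemma sigma2_key {A : Type*} [MetricSpace A] [CompactSpace A]
    (G : A × A × A × A → A) (K : A × A → A) (ψ : ℕ → A × A → A)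
    (h1 : ∀ (m k : ℕ), 1 ≤ k → ∀ x y : A, G (ψ (m + k) (x, y), ψ m (x, y), x, y) = x)
    (h2 : ∀ u x y : A, K (x, y) = G (u, u, x, y))
    {c : ℝ≥0∞} (hG : jump G < c) (x y : A) :
    edist x (K (x, y)) < c := by
  obtain ⟨p, hp⟩ :=
    exists_clusterPt_of_compactSpace (Filter.map (fun m => ψ m (x, y)) Filter.atTop)
  have hb : jumpAt G (p, p, x, y) < c := lt_of_le_of_lt (le_iSup _ _) hG
  rw [jumpAt] at hb
  simp only [iInf_lt_iff] at hb
  obtain ⟨U, hU, hbU, hdU⟩ := hb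
  have hUn : U ∈ nhds (p, p, x, y) := hU.mem_nhds hbU
  rw [nhds_prod_eq, Filter.mem_prod_iff] at hUn
  obtain ⟨s, hs, t, ht, hst⟩ := hUn
  rw [nhds_prod_eq, Filter.mem_prod_iff] at ht
  obtain ⟨s₂, hs₂, t₂, ht₂, h₂⟩ := ht
  have hxy : (x, y) ∈ t₂ := mem_of_mem_nhds ht₂
  have hW : ∀ a ∈ s ∩ s₂, ∀ b ∈ s ∩ s₂, (a, b, x, y) ∈ U := by
    intro a ha b hb
    exact hst ⟨ha.1, h₂ ⟨hb.2, hxy⟩⟩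
  have hfreq : ∃ᶠ m in Filter.atTop, ψ m (x, y) ∈ s ∩ s₂ :=
    (mapClusterPt_iff_frequently.mp hp) _ (Filter.inter_mem hs hs₂)
  obtain ⟨m, -, hm⟩ := Filter.frequently_atTop.mp hfreq 0
  obtain ⟨m', hmm', hm'⟩ := Filter.frequently_atTop.mp hfreq (m + 1)
  have hx : G (ψ m' (x, y), ψ m (x, y), x, y) = x := by
    have := h1 m (m' - m) (by omega) x y
    rwa [show m + (m' - m) = m' by omega] at this
  have hmemx : x ∈ G '' U := ⟨_, hW _ hm' _ hm, hx⟩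
  have hmemK : K (x, y) ∈ G '' U :=
    ⟨(ψ m (x, y), ψ m (x, y), x, y), hW _ hm _ hm, (h2 _ x y).symm⟩
  exact lt_of_le_of_lt (EMetric.edist_le_diam_of_mem hmemx hmemK) hdU

/-- For a compact metric space `A` with more than one element, any operations
`G : A⁴ → A`, `K : A² → A`, `ψₘ : A² → A` satisfying the equations `Σ₂`
(`G(ψ_{m+k}(x,y), ψ_m(x,y), x, y) = x` for `k ≥ 1`, and
`K(x,y) = G(u,u,x,y) = K(y,x)`) must have `max(χ(G), χ(K)) ≥ diam(A)/2`;
equivalently, one cannot have both `χ(G) < diam(A)/2` and `χ(K) < diam(A)/2`. -/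
theorem jump_ge_half_diam_of_sigma2 {A : Type*} [MetricSpace A] [CompactSpace A]
    [Nontrivial A]
    (G : A × A × A × A → A) (K : A × A → A) (ψ : ℕ → A × A → A)
    (h1 : ∀ (m k : ℕ), 1 ≤ k → ∀ x y : A, G (ψ (m + k) (x, y), ψ m (x, y), x, y) = x)
    (h2 : ∀ u x y : A, K (x, y) = G (u, u, x, y))
    (h3 : ∀ x y : A, K (x, y) = K (y, x)) :
    EMetric.diam (Set.univ : Set A) / 2 ≤ max (jump G) (jump K) := by
  by_contra h
  push_neg at h
  have hG : jump G < EMetric.diam (Set.univ : Set A) / 2 :=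
    lt_of_le_of_lt (le_max_left _ _) h
  obtain ⟨c, hc1, hc2⟩ := exists_between hG
  have key := sigma2_key G K ψ h1 h2 hc1
  have hdiam : EMetric.diam (Set.univ : Set A) ≤ c + c := by
    apply EMetric.diam_le
    intro x _ y _
    calc edist x y ≤ edist x (K (x, y)) + edist (K (x, y)) y := edist_triangle _ _ _
      _ ≤ c + c := by
          refine add_le_add (key x y).le ?_
          rw [h3 x y, edist_comm]
          exact (key y x).le
  have : EMetric.diam (Set.univ : Set A) / 2 ≤ c := by
    rw [ENNReal.div_le_iff_le_mul (Or.inl two_ne_zero) (Or.inl ENNReal.ofNat_ne_top)]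
    rwa [mul_two]
  exact absurd (lt_of_le_of_lt this hc2) (lt_irrefl _)
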